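/- Let p be a prime and f : ℤ_p → ℂ_p a uniformly differentiable function. Then the Volkenborn integral I_0(f) = lim_{N→∞} p^{−N} ∑_{x=0}^{p^N−1} f(x) satisfies the valuation bound ν_p(I_0(f)) ≥ ν(f) − 1, where ν(f) = min{ inf_{x} ν_p(f(x)), inf_{x≠y} ν_p((f(x) − f(y))/(x − y)) }. -/

import Mathlib

open Filter

lemma sum_range_mul_eq' {M : Type*} [AddCommMonoid M] (g : ℕ → M) (m n : ℕ) (hn : 0 < n) :
    ∑ x ∈ Finset.range (m * n), g x
      = ∑ i ∈ Finset.range m, ∑ j ∈ Finset.range n, g (i * n + j) := by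
  rw [← Finset.sum_product']
  refine Finset.sum_nbij' (fun x => (x / n, x % n)) (fun q => q.1 * n + q.2) ?_ ?_ ?_ ?_ ?_
  · intro x hx
    simp only [Finset.mem_range] at hx
    simp only [Finset.mem_product, Finset.mem_range]
    exact ⟨Nat.div_lt_of_lt_mul (by rwa [mul_comm] at hx), Nat.mod_lt _ hn⟩
  · intro q hq
    simp only [Finset.mem_product, Finset.mem_range] at hq
    simp only [Finset.mem_range]
    calc q.1 * n + q.2 < q.1 * n + n := by omega
    _ = (q.1 + 1) * n := by ring
    _ ≤ m * n := Nat.mul_le_mul_right n hq.1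
  · intro x _; simp only; rw [mul_comm]; exact Nat.div_add_mod x n
  · intro q hq
    simp only [Finset.mem_product, Finset.mem_range] at hq
    have h1 : (q.1 * n + q.2) / n = q.1 := by
      rw [mul_comm, Nat.mul_add_div hn, Nat.div_eq_of_lt hq.2, Nat.add_zero]
    have h2 : (q.1 * n + q.2) % n = q.2 := by
      rw [mul_comm, Nat.mul_add_mod, Nat.mod_eq_of_lt hq.2]
    simp [h1, h2]
  · intro x _; simp only; rw [Nat.div_add_mod']

/-- Valuation bound for the Volkenborn integral: `ν_p(I_0(f)) ≥ ν(f) - 1`, stated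
multiplicatively: if `‖f‖ ≤ C` and all difference quotients of `f` have norm `≤ C`
(i.e. `ν(f) ≥ -log_p C`), then `‖I_0(f)‖ ≤ p·C`. -/
theorem stmt12 (p : ℕ) [Fact p.Prime] {K : Type*} [NontriviallyNormedField K]
    [NormedAlgebra ℚ_[p] K] [CompleteSpace K]
    (f : ℤ_[p] → K) (C : ℝ)
    (hfb : ∀ x : ℤ_[p], ‖f x‖ ≤ C)
    (hfd : ∀ x y : ℤ_[p], x ≠ y →
      ‖(f x - f y) / algebraMap ℚ_[p] K ((x : ℚ_[p]) - (y : ℚ_[p]))‖ ≤ C)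
    (I : K)
    (hI : Tendsto (fun N : ℕ => ((p : K) ^ N)⁻¹ * ∑ x ∈ Finset.range (p ^ N), f (x : ℤ_[p]))
      atTop (nhds I)) :
    ‖I‖ ≤ p * C := by
  haveI : IsUltrametricDist K := IsUltrametricDist.of_normedAlgebra ℚ_[p]
  have hp : p.Prime := Fact.out
  have hp0 : 0 < p := hp.pos
  have hpR : (1:ℝ) ≤ (p:ℝ) := by exact_mod_cast hp0
  have hpR0 : (0:ℝ) < (p:ℝ) := by exact_mod_cast hp0
  have hC0 : 0 ≤ C := le_trans (norm_nonneg _) (hfb 0)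
  -- norm of p in K
  have hnp : ‖(p : K)‖ = ((p:ℝ))⁻¹ := by
    rw [← map_natCast (algebraMap ℚ_[p] K) p, norm_algebraMap']
    exact Padic.norm_p
  -- Lipschitz bound
  have hlip : ∀ x y : ℤ_[p], ‖f x - f y‖ ≤ C * ‖x - y‖ := by
    intro x y
    rcases eq_or_ne x y with rfl | hxy
    · simp [hC0]
    · have hzq : ((x:ℚ_[p]) - (y:ℚ_[p])) ≠ 0 :=
        sub_ne_zero.mpr (fun h => hxy (Subtype.coe_injective h))
      have ha : algebraMap ℚ_[p] K ((x:ℚ_[p]) - (y:ℚ_[p])) ≠ 0 :=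
        (map_ne_zero_iff _ (algebraMap ℚ_[p] K).injective).mpr hzq
      have h2 : f x - f y
          = ((f x - f y) / algebraMap ℚ_[p] K ((x:ℚ_[p]) - (y:ℚ_[p])))
            * algebraMap ℚ_[p] K ((x:ℚ_[p]) - (y:ℚ_[p])) := (div_mul_cancel₀ _ ha).symm
      have hnorm : ‖(x:ℚ_[p]) - (y:ℚ_[p])‖ = ‖x - y‖ := by
        rw [← PadicInt.coe_sub, PadicInt.padic_norm_e_of_padicInt]
      rw [h2, norm_mul, norm_algebraMap', hnorm]
      exact mul_le_mul_of_nonneg_right (hfd x y hxy) (norm_nonneg _)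
  -- key valuation bound by induction
  have key : ∀ N : ℕ, ‖∑ x ∈ Finset.range (p ^ N), f (x : ℤ_[p])‖ ≤ C * p * ((p:ℝ) ^ N)⁻¹ := by
    intro N
    induction N with
    | zero =>
      simp only [pow_zero, Finset.range_one, Finset.sum_singleton, inv_one, mul_one]
      calc ‖f ((0:ℕ) : ℤ_[p])‖ ≤ C := hfb _
      _ ≤ C * p := by nlinarith
    | succ N ih =>
      have hdecomp : ∑ x ∈ Finset.range (p ^ (N+1)), f (x : ℤ_[p])
          = (p : K) * (∑ x ∈ Finset.range (p ^ N), f (x : ℤ_[p]))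
            + ∑ i ∈ Finset.range p, ∑ j ∈ Finset.range (p ^ N),
                (f ((i * p ^ N + j : ℕ) : ℤ_[p]) - f ((j : ℕ) : ℤ_[p])) := by
        rw [pow_succ', sum_range_mul_eq' _ p (p ^ N) (pow_pos hp0 N)]
        have hsplit : ∀ i ∈ Finset.range p,
            ∑ j ∈ Finset.range (p ^ N), f ((i * p ^ N + j : ℕ) : ℤ_[p])
              = (∑ j ∈ Finset.range (p ^ N), f ((j : ℕ) : ℤ_[p]))
                + ∑ j ∈ Finset.range (p ^ N),
                    (f ((i * p ^ N + j : ℕ) : ℤ_[p]) - f ((j : ℕ) : ℤ_[p])) := by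
          intro i _
          rw [← Finset.sum_add_distrib]
          exact Finset.sum_congr rfl fun j _ => by ring
        rw [Finset.sum_congr rfl hsplit, Finset.sum_add_distrib, Finset.sum_const,
          Finset.card_range, nsmul_eq_mul]
      rw [hdecomp]
      have hb1 : ‖(p : K) * (∑ x ∈ Finset.range (p ^ N), f (x : ℤ_[p]))‖
          ≤ C * p * ((p:ℝ) ^ (N+1))⁻¹ := by
        rw [norm_mul, hnp]
        calc ((p:ℝ))⁻¹ * ‖∑ x ∈ Finset.range (p ^ N), f (x : ℤ_[p])‖
            ≤ ((p:ℝ))⁻¹ * (C * p * ((p:ℝ) ^ N)⁻¹) := by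
              exact mul_le_mul_of_nonneg_left ih (by positivity)
        _ = C * p * ((p:ℝ) ^ (N+1))⁻¹ := by
              field_simp; ring
      have hb2 : ‖∑ i ∈ Finset.range p, ∑ j ∈ Finset.range (p ^ N),
            (f ((i * p ^ N + j : ℕ) : ℤ_[p]) - f ((j : ℕ) : ℤ_[p]))‖
          ≤ C * p * ((p:ℝ) ^ (N+1))⁻¹ := by
        refine IsUltrametricDist.norm_sum_le_of_forall_le_of_nonneg (by positivity) ?_
        intro i _
        refine IsUltrametricDist.norm_sum_le_of_forall_le_of_nonneg (by positivity) ?_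
        intro j _
        calc ‖f ((i * p ^ N + j : ℕ) : ℤ_[p]) - f ((j : ℕ) : ℤ_[p])‖
            ≤ C * ‖((i * p ^ N + j : ℕ) : ℤ_[p]) - ((j : ℕ) : ℤ_[p])‖ := hlip _ _
        _ ≤ C * ((p:ℝ) ^ N)⁻¹ := by
              refine mul_le_mul_of_nonneg_left ?_ hC0
              have : ((i * p ^ N + j : ℕ) : ℤ_[p]) - ((j : ℕ) : ℤ_[p])
                  = (i : ℤ_[p]) * (p : ℤ_[p]) ^ N := by push_cast; ring
              rw [this, norm_mul, norm_pow, PadicInt.norm_p]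
              calc ‖(i : ℤ_[p])‖ * ((p:ℝ))⁻¹ ^ N ≤ 1 * ((p:ℝ))⁻¹ ^ N :=
                    mul_le_mul_of_nonneg_right (PadicInt.norm_le_one _) (by positivity)
              _ = ((p:ℝ) ^ N)⁻¹ := by rw [one_mul, inv_pow]
        _ = C * p * ((p:ℝ) ^ (N+1))⁻¹ := by field_simp; ring
      calc ‖_ + _‖ ≤ max _ _ := IsUltrametricDist.norm_add_le_max _ _
      _ ≤ C * p * ((p:ℝ) ^ (N+1))⁻¹ := max_le hb1 hb2
  -- conclude
  have hterm : ∀ N : ℕ,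
      ‖((p : K) ^ N)⁻¹ * ∑ x ∈ Finset.range (p ^ N), f (x : ℤ_[p])‖ ≤ p * C := by
    intro N
    rw [norm_mul, norm_inv, norm_pow, hnp, inv_pow, inv_inv]
    calc (p:ℝ) ^ N * ‖∑ x ∈ Finset.range (p ^ N), f (x : ℤ_[p])‖
        ≤ (p:ℝ) ^ N * (C * p * ((p:ℝ) ^ N)⁻¹) :=
          mul_le_mul_of_nonneg_left (key N) (by positivity)
    _ = p * C := by field_simp
  exact le_of_tendsto' hI.norm hterm
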